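/- There exist coefficients a_1, …, a_{m'} ∈ [0,1] such that for the embedding η(v) = (sin(2π a_1 v), cos(2π a_1 v), …, sin(2π a_{m'} v), cos(2π a_{m'} v)) ∈ ℝ^{2m'}, every pair of distinct u, v ∈ {1,…,n} satisfies |⟨η(u), η(v)⟩| ≤ 2√(m' log n). -/

import Mathlib

open Real

/-- The sinusoidal embedding `η(v) = (sin(2π a_1 v), cos(2π a_1 v), …,
sin(2π a_{m'} v), cos(2π a_{m'} v)) ∈ ℝ^{2m'}`, realized as an element of
`EuclideanSpace ℝ (Fin m' × Fin 2)`. -/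
noncomputable def sinCosEmbed (m' : ℕ) (a : Fin m' → ℝ) (v : ℤ) :
    EuclideanSpace ℝ (Fin m' × Fin 2) :=
  WithLp.toLp 2 (fun p => if p.2 = 0 then Real.sin (2 * Real.pi * a p.1 * (v : ℝ))
           else Real.cos (2 * Real.pi * a p.1 * (v : ℝ)))

namespace NearOrthAux

open MeasureTheory ProbabilityTheory Set

noncomputable def μ₀ : Measure ℝ := volume.restrict (Set.Icc 0 1)

lemma μ₀_Icc : μ₀ (Set.Icc 0 1) = 1 := by
  rw [μ₀, Measure.restrict_apply measurableSet_Icc]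
  simp [Real.volume_Icc]

instance : IsProbabilityMeasure μ₀ := by
  constructor
  rw [μ₀, Measure.restrict_apply_univ, Real.volume_Icc]
  norm_num

noncomputable def μp (m : ℕ) : Measure (Fin m → ℝ) := Measure.pi fun _ => μ₀

instance (m : ℕ) : IsProbabilityMeasure (μp m) := by
  constructor
  rw [μp, ← Set.pi_univ Set.univ, Measure.pi_pi]
  simp

lemma μp_eval_preimage (m : ℕ) (i : Fin m) {s : Set ℝ} (_hs : MeasurableSet s) :
    μp m ((fun a => a i) ⁻¹' s) = μ₀ s := by
  classical
  have h1 : ((fun a : Fin m → ℝ => a i) ⁻¹' s)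
      = Set.pi Set.univ (Function.update (fun _ => Set.univ) i s) := Set.eval_preimage
  rw [h1, μp, Measure.pi_pi]
  rw [Finset.prod_eq_single i (fun j _ hj => by
    rw [Function.update_of_ne hj]; exact measure_univ) (by simp)]
  rw [Function.update_self]

lemma map_eval (m : ℕ) (i : Fin m) : (μp m).map (fun a => a i) = μ₀ := by
  ext s hs
  rw [Measure.map_apply (measurable_pi_apply i) hs, μp_eval_preimage m i hs]

lemma indep_eval (m : ℕ) :
    iIndepFun (fun (i : Fin m) (a : Fin m → ℝ) => a i) (μp m) := by
  classical
  rw [ProbabilityTheory.iIndepFun_iff_measure_inter_preimage_eq_mul]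
  intro S sets h_meas
  have h1 : (⋂ i ∈ S, (fun a : Fin m → ℝ => a i) ⁻¹' sets i)
      = Set.pi Set.univ (fun i => if i ∈ S then sets i else Set.univ) := by
    ext a
    simp only [Set.mem_iInter, Set.mem_preimage, Set.mem_pi, Set.mem_univ, true_implies]
    refine forall_congr' fun i => ?_
    by_cases h : i ∈ S <;> simp [h]
  rw [h1, μp, Measure.pi_pi]
  calc ∏ j : Fin m, μ₀ (if j ∈ S then sets j else Set.univ)
      = ∏ j ∈ S, μ₀ (if j ∈ S then sets j else Set.univ) :=
        (Finset.prod_subset (Finset.subset_univ S)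
          (fun x _ hx => by rw [if_neg hx]; exact measure_univ)).symm
    _ = ∏ j ∈ S, μ₀ (sets j) := Finset.prod_congr rfl (fun j hj => by rw [if_pos hj])
    _ = ∏ i ∈ S, (Measure.pi fun _ : Fin m => μ₀) ((fun a => a i) ⁻¹' sets i) :=
        Finset.prod_congr rfl (fun j hj => (μp_eval_preimage m j (h_meas j hj)).symm)

lemma exp_mul_le {t x : ℝ} (hx : |x| ≤ 1) :
    Real.exp (t * x) ≤ Real.cosh t + x * Real.sinh t := by
  rw [abs_le] at hx
  have h1 : (1 - x)/2 + (1 + x)/2 = 1 := by ring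
  have hx1 : 0 ≤ (1 - x)/2 := by linarith [hx.2]
  have hx2 : 0 ≤ (1 + x)/2 := by linarith [hx.1]
  have h2 := convexOn_exp.2 (Set.mem_univ (-t)) (Set.mem_univ t) hx1 hx2 h1
  simp only [smul_eq_mul] at h2
  have harg : (1 - x)/2 * (-t) + (1 + x)/2 * t = t * x := by ring
  rw [harg] at h2
  calc Real.exp (t*x) ≤ (1-x)/2 * Real.exp (-t) + (1+x)/2 * Real.exp t := h2
    _ = Real.cosh t + x * Real.sinh t := by rw [Real.cosh_eq, Real.sinh_eq]; ring

lemma integral_cos_eq_zero (k : ℤ) (hk : k ≠ 0) :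
    ∫ a, Real.cos (2 * π * a * k) ∂μ₀ = 0 := by
  have hc : (2 * π * (k:ℝ)) ≠ 0 := by
    refine mul_ne_zero (mul_ne_zero two_ne_zero Real.pi_ne_zero) ?_
    exact_mod_cast hk
  have h1 : (fun a : ℝ => Real.cos (2 * π * a * (k:ℝ)))
      = fun a => Real.cos (2 * π * (k:ℝ) * a) := by
    funext a; ring_nf
  rw [μ₀, h1, MeasureTheory.integral_Icc_eq_integral_Ioc,
    ← intervalIntegral.integral_of_le (by norm_num : (0:ℝ) ≤ 1),
    intervalIntegral.integral_comp_mul_left Real.cos hc,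
    integral_cos]
  have h2 : Real.sin (2*π*(k:ℝ)*1) = 0 := by
    have h3 : 2*π*(k:ℝ)*1 = ((2*k : ℤ):ℝ) * π := by push_cast; ring
    rw [h3, Real.sin_int_mul_pi]
  have h4 : Real.sin (2*π*(k:ℝ)*0) = 0 := by
    rw [mul_zero, Real.sin_zero]
  rw [h2, h4]
  simp

lemma cos_measurable (k : ℤ) : Measurable fun a : ℝ => Real.cos (2*π*a*(k:ℝ)) := by
  fun_prop

lemma key_mgf (k : ℤ) (hk : k ≠ 0) (t : ℝ) :
    ∫ a, Real.exp (t * Real.cos (2 * π * a * k)) ∂μ₀ ≤ Real.exp (t^2/2) := by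
  have hmeas := cos_measurable k
  have hbd : ∀ a : ℝ, |Real.cos (2*π*a*(k:ℝ))| ≤ 1 := fun a => Real.abs_cos_le_one _
  have hcos_int : Integrable (fun a => Real.cos (2*π*a*(k:ℝ))) μ₀ := by
    refine Integrable.mono' (integrable_const 1) hmeas.aestronglyMeasurable ?_
    filter_upwards with a
    simpa using hbd a
  have hint1 : Integrable (fun a => Real.exp (t * Real.cos (2*π*a*(k:ℝ)))) μ₀ := by
    refine Integrable.mono' (integrable_const (Real.exp |t|))
      ((hmeas.const_mul t).exp.aestronglyMeasurable) ?_
    filter_upwards with a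
    rw [Real.norm_eq_abs, Real.abs_exp, Real.exp_le_exp]
    calc t * Real.cos (2*π*a*(k:ℝ)) ≤ |t * Real.cos (2*π*a*(k:ℝ))| := le_abs_self _
      _ = |t| * |Real.cos (2*π*a*(k:ℝ))| := abs_mul _ _
      _ ≤ |t| * 1 := mul_le_mul_of_nonneg_left (hbd a) (abs_nonneg t)
      _ = |t| := mul_one _
  have hint2 : Integrable
      (fun a => Real.cosh t + Real.cos (2*π*a*(k:ℝ)) * Real.sinh t) μ₀ :=
    (integrable_const _).add (hcos_int.mul_const _)
  calc ∫ a, Real.exp (t * Real.cos (2 * π * a * k)) ∂μ₀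
      ≤ ∫ a, (Real.cosh t + Real.cos (2*π*a*(k:ℝ)) * Real.sinh t) ∂μ₀ :=
        integral_mono hint1 hint2 (fun a => exp_mul_le (hbd a))
    _ = Real.cosh t + (∫ a, Real.cos (2*π*a*(k:ℝ)) ∂μ₀) * Real.sinh t := by
        rw [integral_add (integrable_const _) (hcos_int.mul_const _),
          integral_const, integral_mul_const]
        simp
    _ = Real.cosh t := by rw [integral_cos_eq_zero k hk]; ring
    _ ≤ Real.exp (t^2/2) := Real.cosh_le_exp_half_sq t


lemma tail_bound (m : ℕ) (hm : 0 < m) (k : ℤ) (hk : k ≠ 0) (ε : ℝ) (hε : 0 ≤ ε) :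
    (μp m {a | ε ≤ ∑ i, Real.cos (2*π*(a i)*(k:ℝ))}).toReal ≤ Real.exp (-ε^2/(2*m))
    ∧ (μp m {a | (∑ i, Real.cos (2*π*(a i)*(k:ℝ))) ≤ -ε}).toReal
        ≤ Real.exp (-ε^2/(2*m)) := by
  classical
  set X : Fin m → (Fin m → ℝ) → ℝ := fun i a => Real.cos (2*π*(a i)*(k:ℝ)) with hX
  have hmeasX : ∀ i, Measurable (X i) := by
    intro i
    apply (cos_measurable k).comp (measurable_pi_apply i)
  have hindep : iIndepFun X (μp m) := by
    have := (indep_eval m).comp (fun _ (b : ℝ) => Real.cos (2*π*b*(k:ℝ)))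
      (fun _ => cos_measurable k)
    exact this
  have hXbd : ∀ i a, |X i a| ≤ 1 := fun i a => Real.abs_cos_le_one _
  have hSbd : ∀ a, |(∑ i, X i) a| ≤ (m:ℝ) := by
    intro a
    rw [Finset.sum_apply]
    calc |∑ i, X i a| ≤ ∑ i, |X i a| := Finset.abs_sum_le_sum_abs _ _
      _ ≤ ∑ _i : Fin m, (1:ℝ) := Finset.sum_le_sum (fun i _ => hXbd i a)
      _ = (m:ℝ) := by simp
  have hmeasS : Measurable (∑ i, X i) := by
    have h := Finset.measurable_sum (f := X) Finset.univ (fun i _ => hmeasX i)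
    have he : (∑ i, X i) = fun a => ∑ i, X i a := by
      funext a; rw [Finset.sum_apply]
    rw [he]
    exact h
  have hint : ∀ s : ℝ, Integrable (fun a => Real.exp (s * (∑ i, X i) a)) (μp m) := by
    intro s
    refine Integrable.mono' (integrable_const (Real.exp (|s| * m)))
      ((hmeasS.const_mul s).exp.aestronglyMeasurable) ?_
    filter_upwards with a
    rw [Real.norm_eq_abs, Real.abs_exp, Real.exp_le_exp]
    calc s * (∑ i, X i) a ≤ |s * (∑ i, X i) a| := le_abs_self _
      _ = |s| * |(∑ i, X i) a| := abs_mul _ _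
      _ ≤ |s| * m := mul_le_mul_of_nonneg_left (hSbd a) (abs_nonneg s)
  have hmgfX : ∀ (i : Fin m) (s : ℝ), mgf (X i) (μp m) s ≤ Real.exp (s^2/2) := by
    intro i s
    have hG : Measurable fun b : ℝ => Real.exp (s * Real.cos (2*π*b*(k:ℝ))) :=
      ((cos_measurable k).const_mul s).exp
    have hmap : ∫ b, Real.exp (s * Real.cos (2*π*b*(k:ℝ))) ∂μ₀
        = ∫ a, Real.exp (s * X i a) ∂(μp m) := by
      rw [← map_eval m i]
      exact MeasureTheory.integral_map (measurable_pi_apply i).aemeasurable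
        hG.aestronglyMeasurable
    have : mgf (X i) (μp m) s = ∫ b, Real.exp (s * Real.cos (2*π*b*(k:ℝ))) ∂μ₀ := by
      rw [hmap]; rfl
    rw [this]
    exact key_mgf k hk s
  have hmgfS : ∀ s : ℝ, mgf (∑ i, X i) (μp m) s ≤ Real.exp (m * s^2 / 2) := by
    intro s
    rw [ProbabilityTheory.iIndepFun.mgf_sum hindep hmeasX Finset.univ]
    calc ∏ i : Fin m, mgf (X i) (μp m) s
        ≤ ∏ _i : Fin m, Real.exp (s^2/2) :=
          Finset.prod_le_prod (fun i _ => mgf_nonneg) (fun i _ => hmgfX i s)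
      _ = Real.exp (s^2/2) ^ m := by rw [Finset.prod_const, Finset.card_univ, Fintype.card_fin]
      _ = Real.exp (m * s^2/2) := by
          rw [← Real.exp_nat_mul]; ring_nf
  set l : ℝ := ε / m with hl
  have hl0 : 0 ≤ l := div_nonneg hε (Nat.cast_nonneg m)
  have hm0 : (m:ℝ) ≠ 0 := Nat.cast_ne_zero.2 hm.ne'
  have hkey : Real.exp (-l * ε) * Real.exp (m * l^2/2) = Real.exp (-ε^2/(2*m)) := by
    rw [← Real.exp_add]
    congr 1
    rw [hl]
    field_simp
    ring
  constructor
  · have hup := measure_ge_le_exp_mul_mgf (μ := μp m) (X := ∑ i, X i) ε hl0 (hint l)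
    have hset : {a : Fin m → ℝ | ε ≤ ∑ i, Real.cos (2*π*(a i)*(k:ℝ))}
        = {a | ε ≤ (∑ i, X i) a} := by
      ext a; simp [hX, Finset.sum_apply]
    rw [hset]
    calc (μp m {a | ε ≤ (∑ i, X i) a}).toReal
        ≤ Real.exp (-l * ε) * mgf (∑ i, X i) (μp m) l := hup
      _ ≤ Real.exp (-l * ε) * Real.exp (m * l^2/2) :=
          mul_le_mul_of_nonneg_left (hmgfS l) (Real.exp_pos _).le
      _ = Real.exp (-ε^2/(2*m)) := hkey
  · have hlo := measure_le_le_exp_mul_mgf (μ := μp m) (X := ∑ i, X i) (-ε)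
      (neg_nonpos.2 hl0) (hint (-l))
    have hset : {a : Fin m → ℝ | (∑ i, Real.cos (2*π*(a i)*(k:ℝ))) ≤ -ε}
        = {a | (∑ i, X i) a ≤ -ε} := by
      ext a; simp [hX, Finset.sum_apply]
    rw [hset]
    calc (μp m {a | (∑ i, X i) a ≤ -ε}).toReal
        ≤ Real.exp (-(-l) * (-ε)) * mgf (∑ i, X i) (μp m) (-l) := hlo
      _ ≤ Real.exp (-(-l) * (-ε)) * Real.exp (m * (-l)^2/2) :=
          mul_le_mul_of_nonneg_left (hmgfS (-l)) (Real.exp_pos _).le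
      _ = Real.exp (-ε^2/(2*m)) := by
          rw [← hkey]
          congr 1
          · congr 1; ring
          · congr 1; ring

end NearOrthAux

open MeasureTheory ProbabilityTheory NearOrthAux in
/-- There exist coefficients `a_1, …, a_{m'} ∈ [0,1]` such that for the sinusoidal
embedding `η`, every pair of distinct `u, v ∈ {1,…,n}` satisfies
`|⟨η(u), η(v)⟩| ≤ 2√(m' log n)`. -/
theorem exists_near_orthogonal_embedding (n m' : ℕ) (hn : 0 < n) (hm : 0 < m') :
    ∃ a : Fin m' → ℝ, (∀ j, a j ∈ Set.Icc (0:ℝ) 1) ∧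
      ∀ u v : ℤ, u ∈ Set.Icc (1:ℤ) (n:ℤ) → v ∈ Set.Icc (1:ℤ) (n:ℤ) → u ≠ v →
        |(inner ℝ (sinCosEmbed m' a u) (sinCosEmbed m' a v) : ℝ)| ≤
          2 * Real.sqrt ((m' : ℝ) * Real.log n) := by
  classical
  set t : ℝ := 2 * Real.sqrt ((m' : ℝ) * Real.log n) with ht_def
  have hlog : 0 ≤ Real.log n := Real.log_nonneg (by exact_mod_cast hn)
  have hmlog : 0 ≤ (m' : ℝ) * Real.log n := mul_nonneg (Nat.cast_nonneg _) hlog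
  have ht0 : 0 ≤ t := by positivity
  set S : ℕ → (Fin m' → ℝ) → ℝ := fun k a => ∑ i, Real.cos (2*π*(a i)*(k:ℝ)) with hS_def
  set Bad : Set (Fin m' → ℝ) :=
    ⋃ k ∈ Finset.Icc 1 (n-1), ({a | t ≤ S k a} ∪ {a | S k a ≤ -t}) with hBad_def
  have hm0 : (m':ℝ) ≠ 0 := Nat.cast_ne_zero.2 hm.ne'
  have hexp : Real.exp (-t^2/(2*m')) = (((n:ℝ))^2)⁻¹ := by
    have ht2 : t^2 = 4 * ((m':ℝ) * Real.log n) := by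
      rw [ht_def, mul_pow, Real.sq_sqrt hmlog]; norm_num
    have harg : -t^2/(2*(m':ℝ)) = -(2*Real.log n) := by
      rw [ht2]; field_simp; ring
    rw [harg, Real.exp_neg, two_mul, Real.exp_add,
      Real.exp_log (by exact_mod_cast hn), sq]
  have hq : ∀ k ∈ Finset.Icc 1 (n-1),
      μp m' ({a | t ≤ S k a} ∪ {a | S k a ≤ -t})
        ≤ ENNReal.ofReal (2 * Real.exp (-t^2/(2*m'))) := by
    intro k hk
    rw [Finset.mem_Icc] at hk
    have hk0 : (k:ℤ) ≠ 0 := by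
      simp only [ne_eq, Int.natCast_eq_zero]
      omega
    obtain ⟨h1, h2⟩ := tail_bound m' hm (k:ℤ) hk0 t ht0
    simp only [Int.cast_natCast] at h1 h2
    have e1 : μp m' {a | t ≤ S k a} ≤ ENNReal.ofReal (Real.exp (-t^2/(2*m'))) := by
      rw [ENNReal.le_ofReal_iff_toReal_le (measure_ne_top _ _) (Real.exp_pos _).le]
      exact h1
    have e2 : μp m' {a | S k a ≤ -t} ≤ ENNReal.ofReal (Real.exp (-t^2/(2*m'))) := by
      rw [ENNReal.le_ofReal_iff_toReal_le (measure_ne_top _ _) (Real.exp_pos _).le]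
      exact h2
    calc μp m' ({a | t ≤ S k a} ∪ {a | S k a ≤ -t})
        ≤ μp m' {a | t ≤ S k a} + μp m' {a | S k a ≤ -t} := measure_union_le _ _
      _ ≤ ENNReal.ofReal (Real.exp (-t^2/(2*m'))) + ENNReal.ofReal (Real.exp (-t^2/(2*m'))) :=
          add_le_add e1 e2
      _ = ENNReal.ofReal (2 * Real.exp (-t^2/(2*m'))) := by
          rw [← ENNReal.ofReal_add (Real.exp_pos _).le (Real.exp_pos _).le]
          congr 1; ring
  have hBadlt : μp m' Bad < 1 := by
    have hcard : (Finset.Icc 1 (n-1)).card = n - 1 := by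
      rw [Nat.card_Icc]; omega
    calc μp m' Bad
        ≤ ∑ k ∈ Finset.Icc 1 (n-1), μp m' ({a | t ≤ S k a} ∪ {a | S k a ≤ -t}) :=
          measure_biUnion_finset_le _ _
      _ ≤ ∑ _k ∈ Finset.Icc 1 (n-1), ENNReal.ofReal (2 * Real.exp (-t^2/(2*m'))) :=
          Finset.sum_le_sum hq
      _ = (n-1 : ℕ) • ENNReal.ofReal (2 * Real.exp (-t^2/(2*m'))) := by
          rw [Finset.sum_const, hcard]
      _ = ENNReal.ofReal (((n-1:ℕ):ℝ) * (2 * Real.exp (-t^2/(2*m')))) := by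
          rw [nsmul_eq_mul, ← ENNReal.ofReal_natCast,
            ← ENNReal.ofReal_mul (Nat.cast_nonneg _)]
      _ < 1 := by
          rw [← ENNReal.ofReal_one, ENNReal.ofReal_lt_ofReal_iff one_pos]
          rw [hexp]
          have h1n : ((n-1:ℕ):ℝ) = (n:ℝ) - 1 := by
            rw [Nat.cast_sub hn]; norm_num
          rw [h1n]
          have hn2 : (0:ℝ) < (n:ℝ)^2 := by positivity
          have heq : ((n:ℝ)-1) * (2 * ((n:ℝ)^2)⁻¹) = (2*((n:ℝ)-1))/(n:ℝ)^2 := by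
            field_simp
          rw [heq, div_lt_one hn2]
          have hn1 : (1:ℝ) ≤ (n:ℝ) := by exact_mod_cast hn
          nlinarith [sq_nonneg ((n:ℝ)-1)]
  have hG : μp m' (Set.pi Set.univ (fun _ : Fin m' => Set.Icc (0:ℝ) 1)) = 1 := by
    rw [μp, Measure.pi_pi]
    simp [μ₀_Icc]
  have hne : ((Set.pi Set.univ fun _ : Fin m' => Set.Icc (0:ℝ) 1) \ Bad).Nonempty := by
    rw [Set.nonempty_iff_ne_empty]
    intro hempty
    have hsub : (Set.pi Set.univ fun _ : Fin m' => Set.Icc (0:ℝ) 1) ⊆ Bad := by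
      intro a ha
      by_contra hb
      exact Set.eq_empty_iff_forall_notMem.1 hempty a ⟨ha, hb⟩
    have h1 : (1:ENNReal) ≤ μp m' Bad := hG ▸ measure_mono hsub
    exact absurd (lt_of_le_of_lt h1 hBadlt) (lt_irrefl _)
  obtain ⟨a, haG, haB⟩ := hne
  refine ⟨a, fun j => haG j (Set.mem_univ j), ?_⟩
  intro u v hu hv huv
  rw [Set.mem_Icc] at hu hv
  have hinner : (inner ℝ (sinCosEmbed m' a u) (sinCosEmbed m' a v) : ℝ)
      = ∑ i : Fin m', Real.cos (2*π*(a i)*(((u - v : ℤ)):ℝ)) := by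
    rw [PiLp.inner_apply]
    rw [Fintype.sum_prod_type]
    refine Finset.sum_congr rfl (fun i _ => ?_)
    rw [Fin.sum_univ_two]
    simp only [sinCosEmbed, RCLike.inner_apply, conj_trivial]
    norm_num
    rw [add_comm, ← Real.cos_sub, ← Real.cos_neg]
    congr 1
    ring
  set k' : ℕ := (u - v).natAbs with hk'_def
  have hk'mem : k' ∈ Finset.Icc 1 (n-1) := by
    rw [Finset.mem_Icc]
    omega
  have hcast : ((k':ℕ):ℝ) = |((u - v : ℤ):ℝ)| := by
    rw [hk'_def, Nat.cast_natAbs, Int.cast_abs]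
  have hcos_eq : ∀ i : Fin m',
      Real.cos (2*π*(a i)*(((u - v : ℤ)):ℝ)) = Real.cos (2*π*(a i)*(k':ℝ)) := by
    intro i
    rw [hcast]
    rcases abs_cases (((u - v : ℤ)):ℝ) with ⟨he, _⟩ | ⟨he, _⟩
    · rw [he]
    · rw [he, mul_neg, Real.cos_neg]
  rw [hinner]
  have hsum_eq : (∑ i : Fin m', Real.cos (2*π*(a i)*(((u - v : ℤ)):ℝ))) = S k' a := by
    rw [hS_def]
    exact Finset.sum_congr rfl (fun i _ => hcos_eq i)
  rw [hsum_eq]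
  simp only [hBad_def, Set.mem_iUnion, not_exists] at haB
  have hnot := haB k' hk'mem
  rw [Set.mem_union] at hnot
  push_neg at hnot
  obtain ⟨hn1, hn2⟩ := hnot
  rw [Set.mem_setOf_eq, not_le] at hn1
  rw [Set.mem_setOf_eq, not_le] at hn2
  rw [abs_le]
  constructor <;> [linarith; linarith]
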